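/- Let (M,Q,l) be subextremal Reissner–Nordström–AdS parameters with two positive roots 0 < r_− < r_+ of Δ, and let α ∈ ℝ. Then there exist r_red ∈ (r_−, r_+) and β > 0 (depending only on M, Q, l, α) such that for all r ∈ [r_red, r_+]: β²·Ω²(r) − β·(Ω²)'(r) − (2β/r)·Ω²(r) − α/l² ≥ 1. (This is the positivity of the twisted potential 𝒱 = −(□f)/f − α/l² for the red-shift twisting function f(r) = e^{−βr}.) -/

import Mathlib

-- expansion of Δ at rp + ε
theorem RNadS_aux_expand (M Q l rp ε D : ℝ)
    (hΔp : rp ^ 2 - 2 * M * rp + rp ^ 4 / l ^ 2 + Q ^ 2 = 0)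
    (hD : D = 2 * rp - 2 * M + 4 * rp ^ 3 / l ^ 2) :
    (rp + ε) ^ 2 - 2 * M * (rp + ε) + (rp + ε) ^ 4 / l ^ 2 + Q ^ 2
      = ε * D + ε ^ 2 * (1 + (6 * rp ^ 2 + 4 * rp * ε + ε ^ 2) / l ^ 2) := by
  subst hD; linear_combination hΔp

-- Δ is negative just to the right of rp when Δ'(rp) < 0
theorem RNadS_aux_neg (M Q l rp D : ℝ) (hl : 0 < l) (hrp : 0 < rp)
    (hΔp : rp ^ 2 - 2 * M * rp + rp ^ 4 / l ^ 2 + Q ^ 2 = 0)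
    (hD : D = 2 * rp - 2 * M + 4 * rp ^ 3 / l ^ 2) (hDlt : D < 0) :
    ∃ ε : ℝ, 0 < ε ∧
      (rp + ε) ^ 2 - 2 * M * (rp + ε) + (rp + ε) ^ 4 / l ^ 2 + Q ^ 2 < 0 := by
  have hl2 : (0:ℝ) < l ^ 2 := by positivity
  have hC : (0:ℝ) < 1 + (6 * rp ^ 2 + 4 * rp + 1) / l ^ 2 := by positivity
  refine ⟨min 1 (-D / (2 * (1 + (6 * rp ^ 2 + 4 * rp + 1) / l ^ 2))),
    lt_min one_pos (div_pos (by linarith) (by linarith)), ?_⟩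
  set C : ℝ := 1 + (6 * rp ^ 2 + 4 * rp + 1) / l ^ 2 with hCdef
  set ε : ℝ := min 1 (-D / (2 * C)) with hεdef
  have hεpos : 0 < ε := lt_min one_pos (div_pos (by linarith) (by linarith))
  have hε1 : ε ≤ 1 := min_le_left _ _
  have hε2 : ε ≤ -D / (2 * C) := min_le_right _ _
  have hεC : ε * C ≤ -D / 2 := by
    have h := mul_le_mul_of_nonneg_right hε2 hC.le
    have h2 : -D / (2 * C) * C = -D / 2 := by field_simp
    linarith
  have h1 : 1 + (6 * rp ^ 2 + 4 * rp * ε + ε ^ 2) / l ^ 2 ≤ C := by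
    rw [hCdef]
    have hXY : 6 * rp ^ 2 + 4 * rp * ε + ε ^ 2 ≤ 6 * rp ^ 2 + 4 * rp + 1 := by nlinarith
    have := (div_le_div_iff_of_pos_right hl2).mpr hXY
    linarith
  have hb : ε ^ 2 * (1 + (6 * rp ^ 2 + 4 * rp * ε + ε ^ 2) / l ^ 2) ≤ ε * (-D / 2) :=
    calc ε ^ 2 * (1 + (6 * rp ^ 2 + 4 * rp * ε + ε ^ 2) / l ^ 2)
        ≤ ε ^ 2 * C := mul_le_mul_of_nonneg_left h1 (sq_nonneg ε)
      _ = ε * (ε * C) := by ring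
      _ ≤ ε * (-D / 2) := mul_le_mul_of_nonneg_left hεC hεpos.le
  have hexp := RNadS_aux_expand M Q l rp ε D hΔp hD
  have hεD : ε * D < 0 := mul_neg_of_pos_of_neg hεpos hDlt
  nlinarith [hexp, hb]

-- Δ'(rp) > 0 for subextremal parameters
theorem RNadS_slope_pos (M Q l : ℝ) (hM : 0 < M) (hl : 0 < l)
    (rm rp : ℝ) (hrm : 0 < rm) (hrmrp : rm < rp)
    (hΔm : rm ^ 2 - 2 * M * rm + rm ^ 4 / l ^ 2 + Q ^ 2 = 0)
    (hΔp : rp ^ 2 - 2 * M * rp + rp ^ 4 / l ^ 2 + Q ^ 2 = 0)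
    (hroots : ∀ r : ℝ, 0 < r →
      r ^ 2 - 2 * M * r + r ^ 4 / l ^ 2 + Q ^ 2 = 0 → r = rm ∨ r = rp) :
    0 < 2 * rp - 2 * M + 4 * rp ^ 3 / l ^ 2 := by
  have hl2 : (0:ℝ) < l ^ 2 := by positivity
  have hrp : 0 < rp := hrm.trans hrmrp
  by_contra hD
  push_neg at hD
  rcases lt_or_eq_of_le hD with hDlt | hDeq
  · obtain ⟨ε, hεpos, hgneg⟩ := RNadS_aux_neg M Q l rp _ hl hrp hΔp rfl hDlt
    set R : ℝ := max (rp + ε + 1) (2 * M * l ^ 2 + 1) with hRdef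
    have hR1 : rp + ε + 1 ≤ R := le_max_left _ _
    have hR2 : 2 * M * l ^ 2 + 1 ≤ R := le_max_right _ _
    have hRge1 : 1 ≤ R := by nlinarith [mul_pos hM hl2]
    have hR3 : 2 * M * l ^ 2 < R ^ 3 := by
      have h2 : R ≤ R ^ 3 := by
        nlinarith [mul_nonneg (by linarith : (0:ℝ) ≤ R)
          (by nlinarith : (0:ℝ) ≤ R ^ 2 - 1)]
      linarith
    have hgR : 0 < R ^ 2 - 2 * M * R + R ^ 4 / l ^ 2 + Q ^ 2 := by
      have h4 : 0 < R ^ 3 / l ^ 2 - 2 * M := by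
        rw [sub_pos, lt_div_iff₀ hl2]; nlinarith
      have h5 : 0 < R * (R ^ 3 / l ^ 2 - 2 * M) := mul_pos (by linarith) h4
      have h6 : R ^ 4 / l ^ 2 - 2 * M * R = R * (R ^ 3 / l ^ 2 - 2 * M) := by ring
      nlinarith [sq_nonneg Q, mul_pos (lt_of_lt_of_le one_pos hRge1) (lt_of_lt_of_le one_pos hRge1)]
    have hle : rp + ε ≤ R := by linarith
    have hcont : ContinuousOn (fun x : ℝ => x ^ 2 - 2 * M * x + x ^ 4 / l ^ 2 + Q ^ 2)
        (Set.Icc (rp + ε) R) := (by fun_prop : Continuous _).continuousOn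
    have hmem : (0:ℝ) ∈ Set.Icc ((rp + ε) ^ 2 - 2 * M * (rp + ε) + (rp + ε) ^ 4 / l ^ 2 + Q ^ 2)
        (R ^ 2 - 2 * M * R + R ^ 4 / l ^ 2 + Q ^ 2) := ⟨hgneg.le, hgR.le⟩
    obtain ⟨s, hs, hgs⟩ := intermediate_value_Icc hle hcont hmem
    have hspos : 0 < s := by have := hs.1; linarith
    rcases hroots s hspos hgs with h | h
    · have := hs.1; linarith
    · have := hs.1; linarith
  · have hD0 : 2 * rp - 2 * M + 4 * rp ^ 3 / l ^ 2 = 0 := hDeq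
    have hl0 : l ≠ 0 := ne_of_gt hl
    field_simp at hΔm hΔp hD0
    have key : (rm - rp) ^ 2 * (l ^ 2 + rm ^ 2 + 2 * rm * rp + 3 * rp ^ 2) = 0 := by
      linear_combination hΔm - hΔp - (rm - rp) * hD0
    have h5 : 0 < (rm - rp) ^ 2 := by
      have h6 : rm - rp ≠ 0 := by intro h; nlinarith
      positivity
    have h7 : (0:ℝ) < l ^ 2 + rm ^ 2 + 2 * rm * rp + 3 * rp ^ 2 := by
      nlinarith [sq_nonneg l, mul_pos hrm (hrm.trans hrmrp), sq_nonneg rm, sq_nonneg rp, hl]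
    linarith [mul_pos h5 h7, key]

-- derivative of Ω²
theorem RNadS_hasDeriv (M Q l : ℝ) (r : ℝ) (hr : r ≠ 0) (hl : l ≠ 0) :
    HasDerivAt (fun s : ℝ => -(1 - 2 * M / s + Q ^ 2 / s ^ 2 + s ^ 2 / l ^ 2))
      (-(2 * M / r ^ 2 - 2 * Q ^ 2 / r ^ 3 + 2 * r / l ^ 2)) r := by
  have hsq : HasDerivAt (fun s : ℝ => s ^ 2) (2 * r) r := by
    simpa using hasDerivAt_pow 2 r
  have hinv : HasDerivAt (fun s : ℝ => s⁻¹) (-(r ^ 2)⁻¹) r := hasDerivAt_inv hr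
  have hsqinv : HasDerivAt (fun s : ℝ => (s ^ 2)⁻¹) (-(2 * r) / (r ^ 2) ^ 2) r :=
    hsq.inv (pow_ne_zero 2 hr)
  have h : HasDerivAt (fun s : ℝ => -(1 - 2 * M * s⁻¹ + Q ^ 2 * (s ^ 2)⁻¹ + s ^ 2 / l ^ 2))
      (-(-(2 * M * -(r ^ 2)⁻¹) + Q ^ 2 * (-(2 * r) / (r ^ 2) ^ 2) + 2 * r / l ^ 2)) r :=
    ((((hinv.const_mul (2 * M)).const_sub 1).add
      (hsqinv.const_mul (Q ^ 2))).add (hsq.div_const (l ^ 2))).neg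
  have heq : (fun s : ℝ => -(1 - 2 * M / s + Q ^ 2 / s ^ 2 + s ^ 2 / l ^ 2))
      = fun s : ℝ => -(1 - 2 * M * s⁻¹ + Q ^ 2 * (s ^ 2)⁻¹ + s ^ 2 / l ^ 2) := by
    funext s; rw [div_eq_mul_inv, div_eq_mul_inv (Q ^ 2)]
  rw [heq]
  convert h using 1
  field_simp
  ring

set_option maxHeartbeats 1600000 in
/-- Positivity of the twisted potential for the red-shift twisting function
`f(r) = e^{−βr}` near the event horizon `r₊`: there are `r_red ∈ (r₋, r₊)` and
`β > 0` with `β²Ω² − β(Ω²)' − (2β/r)Ω² − α/l² ≥ 1` on `[r_red, r₊]`. -/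
theorem stmt9 (M Q l α : ℝ) (hM : 0 < M) (hl : 0 < l)
    (rm rp : ℝ) (hrm : 0 < rm) (hrmrp : rm < rp)
    (hΔm : rm ^ 2 - 2 * M * rm + rm ^ 4 / l ^ 2 + Q ^ 2 = 0)
    (hΔp : rp ^ 2 - 2 * M * rp + rp ^ 4 / l ^ 2 + Q ^ 2 = 0)
    (hroots : ∀ r : ℝ, 0 < r →
      r ^ 2 - 2 * M * r + r ^ 4 / l ^ 2 + Q ^ 2 = 0 → r = rm ∨ r = rp) :
    ∃ rred : ℝ, rm < rred ∧ rred < rp ∧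
      ∃ β : ℝ, 0 < β ∧
        ∀ r ∈ Set.Icc rred rp,
          1 ≤ β ^ 2 * (-(1 - 2 * M / r + Q ^ 2 / r ^ 2 + r ^ 2 / l ^ 2))
              - β * deriv (fun s : ℝ =>
                  -(1 - 2 * M / s + Q ^ 2 / s ^ 2 + s ^ 2 / l ^ 2)) r
              - (2 * β / r) * (-(1 - 2 * M / r + Q ^ 2 / r ^ 2 + r ^ 2 / l ^ 2))
              - α / l ^ 2 := by
  have hrp : 0 < rp := hrm.trans hrmrp
  have hl2 : (0:ℝ) < l ^ 2 := by positivity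
  have hl0 : l ≠ 0 := ne_of_gt hl
  have hD : 0 < 2 * rp - 2 * M + 4 * rp ^ 3 / l ^ 2 :=
    RNadS_slope_pos M Q l hM hl rm rp hrm hrmrp hΔm hΔp hroots
  -- F(rp) = 0
  have hrp0 : rp ≠ 0 := ne_of_gt hrp
  have hp' : rp ^ 2 - 2 * M * rp + rp ^ 4 / l ^ 2 + Q ^ 2 = 0 := hΔp
  field_simp at hp'
  have hFrp : -(1 - 2 * M / rp + Q ^ 2 / rp ^ 2 + rp ^ 2 / l ^ 2) = 0 := by
    linear_combination (norm := skip) (-1 / rp ^ 2) * hΔp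
    field_simp
    ring
  -- c and its relation to G(rp)
  set c : ℝ := (2 * rp - 2 * M + 4 * rp ^ 3 / l ^ 2) / (2 * rp ^ 2) with hcdef
  have hcpos : 0 < c := div_pos hD (by positivity)
  have h2c : 2 * M / rp ^ 2 - 2 * Q ^ 2 / rp ^ 3 + 2 * rp / l ^ 2 = 2 * c := by
    rw [hcdef]
    linear_combination (norm := skip) (-2 / rp ^ 3) * hΔp
    field_simp
    ring
  -- continuity of G at rp gives δ
  have hGc : ContinuousAt (fun x : ℝ => 2 * M / x ^ 2 - 2 * Q ^ 2 / x ^ 3 + 2 * x / l ^ 2) rp := by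
    apply ContinuousAt.add
    apply ContinuousAt.sub
    · exact continuousAt_const.div (by fun_prop) (by positivity)
    · exact continuousAt_const.div (by fun_prop) (by positivity)
    · exact (continuousAt_id.const_mul 2).div_const _
  obtain ⟨δ, hδpos, hδ⟩ := Metric.continuousAt_iff.mp hGc c hcpos
  -- K bound
  set K : ℝ := 2 * M / rm ^ 2 + 2 * rp / l ^ 2 with hKdef
  have hKpos : 0 < K := by positivity
  -- lower bound on G near rp
  have hGlow : ∀ x : ℝ, rp - δ < x → x ≤ rp →
      c < 2 * M / x ^ 2 - 2 * Q ^ 2 / x ^ 3 + 2 * x / l ^ 2 := by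
    intro x h1 h2
    have hdist : dist x rp < δ := by
      rw [Real.dist_eq, abs_lt]; constructor <;> linarith
    have := hδ hdist
    rw [Real.dist_eq, abs_lt] at this
    have h3 := this.1
    rw [h2c] at h3
    linarith
  -- upper bound on G for x ∈ [rm, rp]
  have hGup : ∀ x : ℝ, rm ≤ x → x ≤ rp →
      2 * M / x ^ 2 - 2 * Q ^ 2 / x ^ 3 + 2 * x / l ^ 2 ≤ K := by
    intro x h1 h2
    have hx : 0 < x := lt_of_lt_of_le hrm h1
    have e1 : 2 * M / x ^ 2 ≤ 2 * M / rm ^ 2 := by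
      apply div_le_div_of_nonneg_left (by linarith) (by positivity) (by nlinarith)
    have e2 : 0 ≤ 2 * Q ^ 2 / x ^ 3 := by positivity
    have e3 : 2 * x / l ^ 2 ≤ 2 * rp / l ^ 2 := by gcongr <;> linarith
    rw [hKdef]; linarith
  -- choose rred and β
  set rred : ℝ := max ((rm + rp) / 2) (rp - min (δ / 2) (c * rm / (4 * K))) with hrreddef
  have hmin_pos : 0 < min (δ / 2) (c * rm / (4 * K)) :=
    lt_min (by linarith) (by positivity)
  have hrr1 : rm < rred := lt_of_lt_of_le (by linarith) (le_max_left _ _)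
  have hrr2 : rred < rp := max_lt (by linarith) (by linarith)
  have hrr3 : rp - rred ≤ min (δ / 2) (c * rm / (4 * K)) := by
    have := le_max_right ((rm + rp) / 2) (rp - min (δ / 2) (c * rm / (4 * K)))
    linarith
  have hrr4 : rp - rred ≤ δ / 2 := le_trans hrr3 (min_le_left _ _)
  have hrr5 : rp - rred ≤ c * rm / (4 * K) := le_trans hrr3 (min_le_right _ _)
  refine ⟨rred, hrr1, hrr2, max 1 (2 * (1 + α / l ^ 2) / c), lt_of_lt_of_le one_pos (le_max_left _ _), ?_⟩
  set β : ℝ := max 1 (2 * (1 + α / l ^ 2) / c) with hβdef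
  have hβ1 : 1 ≤ β := le_max_left _ _
  have hβpos : 0 < β := lt_of_lt_of_le one_pos hβ1
  have hβc : 1 + α / l ^ 2 ≤ β * c / 2 := by
    have h := le_max_right 1 (2 * (1 + α / l ^ 2) / c)
    have h2 := mul_le_mul_of_nonneg_right h hcpos.le
    have h3 : 2 * (1 + α / l ^ 2) / c * c = 2 * (1 + α / l ^ 2) := by
      field_simp
    rw [h3] at h2
    linarith
  intro r hr
  obtain ⟨hr1, hr2⟩ := hr
  have hr0 : 0 < r := lt_of_lt_of_le (hrm.trans hrr1) hr1
  have hrm_le : rm ≤ r := le_of_lt (lt_of_lt_of_le hrr1 hr1)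
  -- rewrite the derivative
  rw [(RNadS_hasDeriv M Q l r (ne_of_gt hr0) hl0).deriv]
  -- lower bound for G at r
  have hGr : c < 2 * M / r ^ 2 - 2 * Q ^ 2 / r ^ 3 + 2 * r / l ^ 2 :=
    hGlow r (by linarith) hr2
  -- bounds on F r
  have hFbounds : 0 ≤ -(1 - 2 * M / r + Q ^ 2 / r ^ 2 + r ^ 2 / l ^ 2) ∧
      -(1 - 2 * M / r + Q ^ 2 / r ^ 2 + r ^ 2 / l ^ 2) ≤ K * (rp - rred) := by
    rcases eq_or_lt_of_le hr2 with heq | hlt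
    · subst heq
      rw [hFrp]
      constructor
      · exact le_refl 0
      · exact mul_nonneg hKpos.le (by linarith)
    · have hcont : ContinuousOn (fun s : ℝ => -(1 - 2 * M / s + Q ^ 2 / s ^ 2 + s ^ 2 / l ^ 2))
          (Set.Icc r rp) := fun x hx =>
        (RNadS_hasDeriv M Q l x (ne_of_gt (lt_of_lt_of_le hr0 hx.1)) hl0).continuousAt.continuousWithinAt
      have hdiff : ∀ x ∈ Set.Ioo r rp,
          HasDerivAt (fun s : ℝ => -(1 - 2 * M / s + Q ^ 2 / s ^ 2 + s ^ 2 / l ^ 2))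
            (-(2 * M / x ^ 2 - 2 * Q ^ 2 / x ^ 3 + 2 * x / l ^ 2)) x := fun x hx =>
        RNadS_hasDeriv M Q l x (ne_of_gt (lt_trans hr0 hx.1)) hl0
      obtain ⟨x, hx, hslope⟩ := exists_hasDerivAt_eq_slope
        (fun s : ℝ => -(1 - 2 * M / s + Q ^ 2 / s ^ 2 + s ^ 2 / l ^ 2))
        (fun x => -(2 * M / x ^ 2 - 2 * Q ^ 2 / x ^ 3 + 2 * x / l ^ 2)) hlt hcont hdiff
      rw [hFrp] at hslope
      have hne : rp - r ≠ 0 := ne_of_gt (by linarith)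
      have hFr : -(1 - 2 * M / r + Q ^ 2 / r ^ 2 + r ^ 2 / l ^ 2)
          = (2 * M / x ^ 2 - 2 * Q ^ 2 / x ^ 3 + 2 * x / l ^ 2) * (rp - r) := by
        have h := (div_eq_iff hne).mp hslope.symm
        linarith [h]
      have hxlow : c < 2 * M / x ^ 2 - 2 * Q ^ 2 / x ^ 3 + 2 * x / l ^ 2 :=
        hGlow x (by linarith [hx.1]) (le_of_lt hx.2)
      have hxup : 2 * M / x ^ 2 - 2 * Q ^ 2 / x ^ 3 + 2 * x / l ^ 2 ≤ K :=
        hGup x (by linarith [hx.1]) (le_of_lt hx.2)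
      constructor
      · rw [hFr]
        exact mul_nonneg (le_trans hcpos.le hxlow.le) (by linarith)
      · rw [hFr]
        calc (2 * M / x ^ 2 - 2 * Q ^ 2 / x ^ 3 + 2 * x / l ^ 2) * (rp - r)
            ≤ K * (rp - r) := mul_le_mul_of_nonneg_right hxup (by linarith)
          _ ≤ K * (rp - rred) := mul_le_mul_of_nonneg_left (by linarith) hKpos.le
  obtain ⟨hF0, hFK⟩ := hFbounds
  -- final estimate
  have h1 : 0 ≤ β ^ 2 * (-(1 - 2 * M / r + Q ^ 2 / r ^ 2 + r ^ 2 / l ^ 2)) :=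
    mul_nonneg (sq_nonneg β) hF0
  have h2 : β * c ≤ β * (2 * M / r ^ 2 - 2 * Q ^ 2 / r ^ 3 + 2 * r / l ^ 2) :=
    mul_le_mul_of_nonneg_left hGr.le hβpos.le
  -- (2β/r) F ≤ β c / 2
  have h3a : 2 * β / r ≤ 2 * β / rm :=
    div_le_div_of_nonneg_left (by linarith) hrm hrm_le
  have h3b : (2 * β / r) * (-(1 - 2 * M / r + Q ^ 2 / r ^ 2 + r ^ 2 / l ^ 2))
      ≤ (2 * β / rm) * (-(1 - 2 * M / r + Q ^ 2 / r ^ 2 + r ^ 2 / l ^ 2)) :=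
    mul_le_mul_of_nonneg_right h3a hF0
  have h3c : (2 * β / rm) * (-(1 - 2 * M / r + Q ^ 2 / r ^ 2 + r ^ 2 / l ^ 2))
      ≤ (2 * β / rm) * (K * (rp - rred)) :=
    mul_le_mul_of_nonneg_left hFK (by positivity)
  have h3d : (2 * β / rm) * (K * (rp - rred)) ≤ (2 * β / rm) * (K * (c * rm / (4 * K))) :=
    mul_le_mul_of_nonneg_left (mul_le_mul_of_nonneg_left hrr5 hKpos.le) (by positivity)
  have h3e : (2 * β / rm) * (K * (c * rm / (4 * K))) = β * c / 2 := by
    field_simp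
    ring
  have hneg : β * -(2 * M / r ^ 2 - 2 * Q ^ 2 / r ^ 3 + 2 * r / l ^ 2)
      = -(β * (2 * M / r ^ 2 - 2 * Q ^ 2 / r ^ 3 + 2 * r / l ^ 2)) := by ring
  rw [hneg]
  linarith [h1, h2, h3b, h3c, h3d, h3e, hβc]
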